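/- Let $S = K[X_1,\ldots,X_n]$ over a perfect field $K$ of characteristic $p > 0$, let $f \in S$ with $\mathrm{in}_<(f) = X_1^{p-1}\cdots X_n^{p-1}$ for some monomial order $<$. Then $f \star \mathrm{Tr}$ is an $F$-splitting of $S$, and for any ideal $I \subset S$ with $\mathrm{Tr}(fI) \subseteq I$, the initial ideal $\mathrm{in}_<(I)$ is a squarefree monomial ideal. -/

import Mathlib

set_option linter.unusedSectionVars false


open MvPolynomial
open scoped Classical

/-- The trace map `Tr : F_*S → S`, the projection onto the basis element
`X_1^{p-1} ⋯ X_n^{p-1}` of the monomial basis of `F_*S` over `S`. -/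
noncomputable def Tr (n p : ℕ) [Fact p.Prime] (K : Type) [Field K] [CharP K p]
    [PerfectRing K p] (g : MvPolynomial (Fin n) K) : MvPolynomial (Fin n) K :=
  ∑ u ∈ g.support,
    if (∀ j, u j % p = p - 1) then
      monomial
        (u.mapRange (fun a => (a + 1) / p - 1)
          (by simp [Nat.div_eq_of_lt (Fact.out : p.Prime).one_lt]))
        ((frobeniusEquiv K p).symm (coeff u g))
    else 0

/-- The leading exponent (multidegree) of a polynomial with respect to a monomial order. -/
noncomputable def lexp {n : ℕ} {K : Type} [Field K] (m : MonomialOrder (Fin n))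
    (f : MvPolynomial (Fin n) K) : Fin n →₀ ℕ :=
  m.toSyn.symm (f.support.sup fun u => m.toSyn u)

/-- The initial ideal `in_<(I)` of an ideal `I`, generated by the leading monomials of
the nonzero elements of `I`. -/
noncomputable def initialIdeal {n : ℕ} {K : Type} [Field K] (m : MonomialOrder (Fin n))
    (I : Ideal (MvPolynomial (Fin n) K)) : Ideal (MvPolynomial (Fin n) K) :=
  Ideal.span {g | ∃ f ∈ I, f ≠ 0 ∧ g = monomial (lexp m f) (1 : K)}

/-- An ideal of `K[X_1,…,X_n]` is a squarefree monomial ideal if it is generated by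
monomials all of whose exponents are at most `1`. -/
def IsSqFreeMonomialIdeal (n : ℕ) (K : Type) [Field K]
    (I : Ideal (MvPolynomial (Fin n) K)) : Prop :=
  ∃ G : Set (Fin n →₀ ℕ), (∀ u ∈ G, ∀ j, u j ≤ 1) ∧
    I = Ideal.span ((fun u => monomial u (1 : K)) '' G)

/-! ### Auxiliary development -/

/-- The exponent vector `(p-1, …, p-1)`. -/
noncomputable def qv (n p : ℕ) : Fin n →₀ ℕ :=
  Finsupp.equivFunOnFinite.symm fun _ => p - 1

lemma qv_apply (n p : ℕ) (j : Fin n) : qv n p j = p - 1 := rfl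

section Aux

variable {n p : ℕ} [Fact p.Prime] {K : Type} [Field K] [CharP K p] [PerfectRing K p]

lemma le_lexp (m : MonomialOrder (Fin n)) {g : MvPolynomial (Fin n) K} {c : Fin n →₀ ℕ}
    (hc : c ∈ g.support) : m.toSyn c ≤ m.toSyn (lexp m g) := by
  rw [lexp, AddEquiv.apply_symm_apply]
  exact Finset.le_sup hc

lemma lexp_mem (m : MonomialOrder (Fin n)) {g : MvPolynomial (Fin n) K} (hg : g ≠ 0) :
    lexp m g ∈ g.support := by
  obtain ⟨c, hc, he⟩ := Finset.exists_mem_eq_sup g.support (support_nonempty.mpr hg)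
    (fun u => m.toSyn u)
  rw [lexp, he, AddEquiv.symm_apply_apply]
  exact hc

lemma lexp_eq (m : MonomialOrder (Fin n)) {g : MvPolynomial (Fin n) K} {v : Fin n →₀ ℕ}
    (hv : coeff v g ≠ 0) (h : ∀ c ∈ g.support, m.toSyn c ≤ m.toSyn v) : lexp m g = v := by
  apply m.toSyn.injective
  rw [lexp, AddEquiv.apply_symm_apply]
  exact le_antisymm (Finset.sup_le h) (Finset.le_sup (mem_support_iff.mpr hv))

lemma coeff_Tr (g : MvPolynomial (Fin n) K) (c : Fin n →₀ ℕ) :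
    coeff c (Tr n p K g) = (frobeniusEquiv K p).symm (coeff (p • c + qv n p) g) := by
  have hp1 : 1 < p := (Fact.out : p.Prime).one_lt
  have hq : ∀ j, (p • c + qv n p) j = p * c j + (p - 1) := by
    intro j
    simp [qv_apply, Finsupp.add_apply, Finsupp.smul_apply]
  have key : ∀ u ∈ g.support,
      coeff c (if (∀ j, u j % p = p - 1) then
        monomial (u.mapRange (fun a => (a + 1) / p - 1)
          (by simp [Nat.div_eq_of_lt (Fact.out : p.Prime).one_lt]))
          ((frobeniusEquiv K p).symm (coeff u g)) else 0)
      = if u = p • c + qv n p then (frobeniusEquiv K p).symm (coeff (p • c + qv n p) g)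
        else 0 := by
    intro u _
    by_cases hcond : ∀ j, u j % p = p - 1
    · rw [if_pos hcond, coeff_monomial]
      by_cases h2 : u = p • c + qv n p
      · subst h2
        rw [if_pos rfl, if_pos]
        ext j
        rw [Finsupp.mapRange_apply, hq j]
        have h3 : p * c j + (p - 1) + 1 = p * (c j + 1) := by
          have : p * (c j + 1) = p * c j + p := by ring
          omega
        rw [h3, Nat.mul_div_cancel_left _ (by omega : 0 < p)]
        omega
      · rw [if_neg h2, if_neg]
        intro hmr
        apply h2
        ext j
        have h3 : (u j + 1) / p - 1 = c j := by
          have := DFunLike.congr_fun hmr j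
          rwa [Finsupp.mapRange_apply] at this
        have h4 : p * (u j / p) + (p - 1) = u j := by
          conv_rhs => rw [← Nat.div_add_mod (u j) p]
          rw [hcond j]
        have h5 : u j + 1 = p * (u j / p + 1) := by
          have : p * (u j / p + 1) = p * (u j / p) + p := by ring
          omega
        have h6 : (u j + 1) / p = u j / p + 1 := by
          rw [h5, Nat.mul_div_cancel_left _ (by omega : 0 < p)]
        rw [h6, Nat.add_sub_cancel] at h3
        rw [hq j, ← h3]
        exact h4.symm
    · rw [if_neg hcond, coeff_zero, if_neg]
      intro h2
      apply hcond
      intro j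
      rw [h2, hq j, Nat.mul_add_mod, Nat.mod_eq_of_lt (by omega)]
  rw [Tr, coeff_sum, Finset.sum_congr rfl key, Finset.sum_ite_eq' g.support (p • c + qv n p)]
  by_cases hmem : p • c + qv n p ∈ g.support
  · rw [if_pos hmem]
  · rw [if_neg hmem, notMem_support_iff.mp hmem, map_zero]

lemma smul_left_cancel_exp {u v : Fin n →₀ ℕ} (h : p • u = p • v) : u = v := by
  ext j
  have := DFunLike.congr_fun h j
  simp only [Finsupp.smul_apply, smul_eq_mul] at this
  exact Nat.eq_of_mul_eq_mul_left (Fact.out : p.Prime).pos this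

lemma coeff_pow_char (s : MvPolynomial (Fin n) K) :
    ∀ c : Fin n →₀ ℕ, coeff (p • c) (s ^ p) = (coeff c s) ^ p := by
  induction s using MvPolynomial.induction_on' with
  | monomial u a =>
    intro c
    rw [monomial_pow, coeff_monomial, coeff_monomial]
    by_cases h : u = c
    · subst h; rw [if_pos rfl, if_pos rfl]
    · rw [if_neg h, if_neg (fun hh => h (smul_left_cancel_exp hh)),
        zero_pow (Fact.out : p.Prime).ne_zero]
  | add s t hs ht =>
    intro c
    rw [add_pow_char, coeff_add, coeff_add, hs, ht, add_pow_char]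

lemma exists_of_coeff_pow_char {s : MvPolynomial (Fin n) K} :
    ∀ {b : Fin n →₀ ℕ}, coeff b (s ^ p) ≠ 0 → ∃ c, b = p • c := by
  induction s using MvPolynomial.induction_on' with
  | monomial u a =>
    intro b hb
    rw [monomial_pow, coeff_monomial] at hb
    refine ⟨u, ?_⟩
    by_contra hne
    rw [if_neg (fun hh => hne hh.symm)] at hb
    exact hb rfl
  | add s t hs ht =>
    intro b hb
    rw [add_pow_char, coeff_add] at hb
    rcases (by by_contra hc; push_neg at hc; rw [hc.1, hc.2] at hb; exact hb (add_zero 0) :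
        coeff b (s ^ p) ≠ 0 ∨ coeff b (t ^ p) ≠ 0) with h | h
    · exact hs h
    · exact ht h

lemma exists_supp_mul {s t : MvPolynomial (Fin n) K} {e : Fin n →₀ ℕ}
    (h : coeff e (s * t) ≠ 0) : ∃ a ∈ s.support, ∃ b ∈ t.support, a + b = e := by
  rw [coeff_mul] at h
  obtain ⟨⟨a, b⟩, hab, hne⟩ := Finset.exists_ne_zero_of_sum_ne_zero h
  exact ⟨a, mem_support_iff.mpr (left_ne_zero_of_mul hne), b,
    mem_support_iff.mpr (right_ne_zero_of_mul hne), Finset.HasAntidiagonal.mem_antidiagonal.mp hab⟩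

lemma supp_monomial_mul {w b : Fin n →₀ ℕ} {g : MvPolynomial (Fin n) K}
    (h : coeff b (monomial w (1 : K) * g) ≠ 0) :
    ∃ b', coeff b' g ≠ 0 ∧ b = w + b' := by
  obtain ⟨a, ha, b', hb', hab⟩ := exists_supp_mul h
  have haw : a = w := by
    rw [mem_support_iff, coeff_monomial] at ha
    by_contra hne
    rw [if_neg (fun hh => hne hh.symm)] at ha
    exact ha rfl
  exact ⟨b', mem_support_iff.mp hb', by rw [← hab, haw]⟩

variable (m : MonomialOrder (Fin n)) {f : MvPolynomial (Fin n) K}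

lemma coeff_top_mul_pow (hlead : lexp m f = qv n p) (hcoeff : coeff (qv n p) f = 1)
    (r : MvPolynomial (Fin n) K) (v : Fin n →₀ ℕ) :
    coeff (p • v + qv n p) (f * r ^ p) = (coeff v r) ^ p := by
  rw [coeff_mul, Finset.sum_eq_single ((qv n p, p • v) : (Fin n →₀ ℕ) × (Fin n →₀ ℕ))]
  · rw [hcoeff, coeff_pow_char, one_mul]
  · rintro ⟨a, b⟩ hab hne
    by_contra hne0
    have ha : coeff a f ≠ 0 := left_ne_zero_of_mul hne0
    have hb : coeff b (r ^ p) ≠ 0 := right_ne_zero_of_mul hne0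
    obtain ⟨c, rfl⟩ := exists_of_coeff_pow_char hb
    have hsum : a + p • c = p • v + qv n p := Finset.HasAntidiagonal.mem_antidiagonal.mp hab
    have hasyn : m.toSyn a ≤ m.toSyn (qv n p) := by
      rw [← hlead]; exact le_lexp m (mem_support_iff.mpr ha)
    -- componentwise : c ≤ v
    have hcv : c ≤ v := by
      rw [Finsupp.le_def]
      intro j
      have hj : a j + p * c j = p * v j + (p - 1) := by
        have h0 := DFunLike.congr_fun hsum j
        simpa [Finsupp.add_apply, Finsupp.smul_apply, qv_apply] using h0
      by_contra hlt
      push_neg at hlt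
      have h1 : p * (v j + 1) ≤ p * c j := Nat.mul_le_mul_left p hlt
      have h2 : p * (v j + 1) = p * v j + p := by ring
      have h2' : p * c j ≤ p * v j + (p - 1) := le_of_le_of_eq (Nat.le_add_left _ _) hj
      have h3 : p * v j + p ≤ p * v j + (p - 1) := (h2 ▸ h1).trans h2'
      have h4 := Nat.le_of_add_le_add_left h3
      have hp1 : 1 < p := (Fact.out : p.Prime).one_lt
      omega
    have hcvsyn : m.toSyn c ≤ m.toSyn v := m.toSyn_monotone hcv
    have hvc : m.toSyn v ≤ m.toSyn c := by
      have h3 := congrArg m.toSyn hsum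
      rw [map_add, map_add, map_nsmul, map_nsmul] at h3
      have h4 : p • m.toSyn v + m.toSyn (qv n p) ≤ m.toSyn (qv n p) + p • m.toSyn c := by
        rw [← h3]; exact add_le_add_left hasyn _
      rw [add_comm (m.toSyn (qv n p))] at h4
      exact le_of_nsmul_le_nsmul_right (Fact.out : p.Prime).ne_zero
        (le_of_add_le_add_right h4)
    have hceq : c = v := m.toSyn.injective (le_antisymm hcvsyn hvc)
    subst hceq
    have haq : a = qv n p := by
      have := hsum
      rw [add_comm (p • c) (qv n p)] at this
      exact add_right_cancel this
    exact hne (by rw [haq])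
  · intro hnm
    exact absurd (Finset.HasAntidiagonal.mem_antidiagonal.mpr (add_comm _ _)) hnm

lemma coeff_top_mul_mono (hlead : lexp m f = qv n p) (hcoeff : coeff (qv n p) f = 1)
    {g : MvPolynomial (Fin n) K} {w v : Fin n →₀ ℕ}
    (hwv : w + lexp m g = p • v) :
    coeff (p • v + qv n p) (f * (monomial w 1 * g)) = coeff (lexp m g) g := by
  rw [coeff_mul, Finset.sum_eq_single ((qv n p, w + lexp m g) : (Fin n →₀ ℕ) × (Fin n →₀ ℕ))]
  · rw [hcoeff, coeff_monomial_mul, one_mul, one_mul]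
  · rintro ⟨a, b⟩ hab hne
    by_contra hne0
    have ha : coeff a f ≠ 0 := left_ne_zero_of_mul hne0
    have hb : coeff b (monomial w (1 : K) * g) ≠ 0 := right_ne_zero_of_mul hne0
    obtain ⟨b', hb', rfl⟩ := supp_monomial_mul hb
    have hsum : a + (w + b') = p • v + qv n p := Finset.HasAntidiagonal.mem_antidiagonal.mp hab
    have hasyn : m.toSyn a ≤ m.toSyn (qv n p) := by
      rw [← hlead]; exact le_lexp m (mem_support_iff.mpr ha)
    have hbsyn : m.toSyn b' ≤ m.toSyn (lexp m g) := le_lexp m (mem_support_iff.mpr hb')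
    have hsum2 : a + (w + b') = qv n p + (w + lexp m g) := by
      rw [hsum, ← hwv]; abel
    have h3 := congrArg m.toSyn hsum2
    rw [map_add, map_add, map_add, map_add] at h3
    have haq : m.toSyn a = m.toSyn (qv n p) := by
      by_contra hne'
      have hlt : m.toSyn a < m.toSyn (qv n p) := lt_of_le_of_ne hasyn hne'
      have : m.toSyn a + (m.toSyn w + m.toSyn b')
          < m.toSyn (qv n p) + (m.toSyn w + m.toSyn (lexp m g)) :=
        add_lt_add_of_lt_of_le hlt (add_le_add_right hbsyn _)
      exact absurd h3 (ne_of_lt this)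
    have haq' : a = qv n p := m.toSyn.injective haq
    have hbq : b' = lexp m g := by
      apply m.toSyn.injective
      rw [haq] at h3
      have := add_left_cancel h3
      exact add_left_cancel this
    exact hne (by rw [haq', hbq])
  · intro hnm
    refine absurd (Finset.HasAntidiagonal.mem_antidiagonal.mpr ?_) hnm
    rw [← hwv]; abel

lemma le_of_coeff_top (hlead : lexp m f = qv n p)
    {g : MvPolynomial (Fin n) K} {w v c : Fin n →₀ ℕ}
    (hwv : w + lexp m g = p • v)
    (h : coeff (p • c + qv n p) (f * (monomial w 1 * g)) ≠ 0) :
    m.toSyn c ≤ m.toSyn v := by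
  obtain ⟨a, ha, b, hb, hab⟩ := exists_supp_mul h
  obtain ⟨b', hb', rfl⟩ := supp_monomial_mul (mem_support_iff.mp hb)
  have hasyn : m.toSyn a ≤ m.toSyn (qv n p) := by
    rw [← hlead]; exact le_lexp m ha
  have hbsyn : m.toSyn b' ≤ m.toSyn (lexp m g) := le_lexp m (mem_support_iff.mpr hb')
  have h3 := congrArg m.toSyn hab
  rw [map_add, map_add, map_add, map_nsmul] at h3
  have hwv' : m.toSyn w + m.toSyn (lexp m g) = p • m.toSyn v := by
    rw [← map_add, hwv, map_nsmul]
  have h4 : p • m.toSyn c + m.toSyn (qv n p) ≤ p • m.toSyn v + m.toSyn (qv n p) := by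
    rw [← h3, ← hwv']
    calc m.toSyn a + (m.toSyn w + m.toSyn b')
        ≤ m.toSyn (qv n p) + (m.toSyn w + m.toSyn (lexp m g)) :=
          add_le_add hasyn (add_le_add_right hbsyn _)
      _ = m.toSyn w + m.toSyn (lexp m g) + m.toSyn (qv n p) := by abel
  exact le_of_nsmul_le_nsmul_right (Fact.out : p.Prime).ne_zero (le_of_add_le_add_right h4)

lemma Tr_step (hlead : lexp m f = qv n p) (hcoeff : coeff (qv n p) f = 1)
    {I : Ideal (MvPolynomial (Fin n) K)} (hI : ∀ g ∈ I, Tr n p K (f * g) ∈ I)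
    {g : MvPolynomial (Fin n) K} (hg : g ∈ I) (hg0 : g ≠ 0) :
    ∃ g' ∈ I, g' ≠ 0 ∧ lexp m g' = (lexp m g).mapRange (fun a => (a + p - 1) / p)
      (by simp [Nat.div_eq_of_lt (Nat.sub_lt (Fact.out : p.Prime).pos Nat.one_pos)]) := by
  have hp0 : 0 < p := (Fact.out : p.Prime).pos
  set u := lexp m g with hu
  set v : Fin n →₀ ℕ := u.mapRange (fun a => (a + p - 1) / p)
      (by simp [Nat.div_eq_of_lt (Nat.sub_lt (Fact.out : p.Prime).pos Nat.one_pos)]) with hv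
  have hvj : ∀ j, v j = (u j + p - 1) / p := fun j => Finsupp.mapRange_apply
  have hle : ∀ j, u j ≤ p * v j := by
    intro j
    have hdm := Nat.div_add_mod (u j + p - 1) p
    have hm := Nat.mod_lt (u j + p - 1) hp0
    rw [hvj j]
    omega
  set w : Fin n →₀ ℕ := p • v - u with hw
  have hwu : w + u = p • v := by
    ext j
    have h1 := hle j
    simp only [hw, Finsupp.add_apply, Finsupp.tsub_apply, Finsupp.smul_apply, smul_eq_mul]
    omega
  refine ⟨Tr n p K (f * (monomial w 1 * g)), hI _ (Ideal.mul_mem_left _ _ hg), ?_, ?_⟩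
  · intro h0
    have := coeff_Tr (p := p) (f * (monomial w 1 * g)) v
    rw [h0, coeff_zero, coeff_top_mul_mono m hlead hcoeff hwu] at this
    have hc : coeff (lexp m g) g ≠ 0 := mem_support_iff.mp (lexp_mem m hg0)
    exact hc ((RingEquiv.map_eq_zero_iff _).mp this.symm)
  · apply lexp_eq
    · rw [coeff_Tr, coeff_top_mul_mono m hlead hcoeff hwu]
      intro h0
      exact mem_support_iff.mp (lexp_mem m hg0) ((RingEquiv.map_eq_zero_iff _).mp h0)
    · intro c hc
      rw [mem_support_iff, coeff_Tr] at hc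
      have : coeff (p • c + qv n p) (f * (monomial w 1 * g)) ≠ 0 := by
        intro h0
        rw [h0, map_zero] at hc
        exact hc rfl
      exact le_of_coeff_top m hlead hwu this

lemma Tr_iter (hlead : lexp m f = qv n p) (hcoeff : coeff (qv n p) f = 1)
    {I : Ideal (MvPolynomial (Fin n) K)} (hI : ∀ g ∈ I, Tr n p K (f * g) ∈ I) :
    ∀ (N : ℕ) (g : MvPolynomial (Fin n) K), g ∈ I → g ≠ 0 → (∑ j, lexp m g j) ≤ N →
    ∃ g' ∈ I, g' ≠ 0 ∧ lexp m g' = (lexp m g).mapRange (fun a => min 1 a) (by simp) := by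
  have hp2 : 2 ≤ p := (Fact.out : p.Prime).two_le
  have hceil_le : ∀ a : ℕ, (a + p - 1) / p ≤ a := by
    intro a
    rw [Nat.div_le_iff_le_mul_add_pred (by omega)]
    have := Nat.le_mul_of_pos_left a (show 0 < p by omega)
    omega
  have hceil_lt : ∀ a : ℕ, 2 ≤ a → (a + p - 1) / p < a := by
    intro a ha
    have h1 : (a + p - 1) / p ≤ a - 1 := by
      rw [Nat.div_le_iff_le_mul_add_pred (by omega)]
      have h2 : 2 * (a - 1) ≤ p * (a - 1) := Nat.mul_le_mul_right _ hp2
      omega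
    omega
  have hceil_pos : ∀ a : ℕ, 1 ≤ a → 1 ≤ (a + p - 1) / p := by
    intro a ha
    rw [Nat.le_div_iff_mul_le (by omega)]
    omega
  intro N
  induction N with
  | zero =>
    intro g hg hg0 hN
    refine ⟨g, hg, hg0, ?_⟩
    have hz : ∀ j, lexp m g j = 0 := by
      intro j
      have : lexp m g j ≤ ∑ i, lexp m g i :=
        Finset.single_le_sum (fun i _ => Nat.zero_le _) (Finset.mem_univ j)
      omega
    ext j
    rw [Finsupp.mapRange_apply, hz j]
    simp
  | succ N ih =>
    intro g hg hg0 hN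
    by_cases hsq : ∀ j, lexp m g j ≤ 1
    · refine ⟨g, hg, hg0, ?_⟩
      ext j
      rw [Finsupp.mapRange_apply]
      exact (min_eq_right (hsq j)).symm
    · push_neg at hsq
      obtain ⟨j0, hj0⟩ := hsq
      obtain ⟨g₁, hg₁I, hg₁0, hg₁lexp⟩ := Tr_step m hlead hcoeff hI hg hg0
      have hsum : ∑ j, lexp m g₁ j < ∑ j, lexp m g j := by
        apply Finset.sum_lt_sum
        · intro i _
          rw [hg₁lexp, Finsupp.mapRange_apply]
          exact hceil_le _
        · exact ⟨j0, Finset.mem_univ j0, by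
            rw [hg₁lexp, Finsupp.mapRange_apply]
            exact hceil_lt _ (by omega)⟩
      obtain ⟨g', hg'I, hg'0, hg'lexp⟩ := ih g₁ hg₁I hg₁0 (by omega)
      refine ⟨g', hg'I, hg'0, ?_⟩
      rw [hg'lexp, hg₁lexp]
      ext j
      simp only [Finsupp.mapRange_apply]
      rcases Nat.eq_zero_or_pos (lexp m g j) with h | h
      · rw [h]
        simp [Nat.div_eq_of_lt (show p - 1 < p by omega)]
      · have h1 := hceil_pos _ h
        rw [min_eq_left h1, min_eq_left h]


end Aux

/-- Let `S = K[X_1,…,X_n]` over a perfect field `K` of characteristic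
`p > 0` and `f ∈ S` with `in_<(f) = X_1^{p-1} ⋯ X_n^{p-1}` (leading monomial, with leading
coefficient `1`) for a monomial order `<`. Then `f ⋆ Tr` is an `F`-splitting of `S`
(`(f ⋆ Tr)(r^p) = r` for all `r`), and for any ideal `I ⊆ S` with `Tr(f·I) ⊆ I`, the
initial ideal `in_<(I)` is a squarefree monomial ideal. -/
theorem stmt19 (n p : ℕ) [Fact p.Prime] (K : Type) [Field K] [CharP K p] [PerfectRing K p]
    (m : MonomialOrder (Fin n)) (f : MvPolynomial (Fin n) K)
    (hlead : lexp m f = Finsupp.equivFunOnFinite.symm fun _ => p - 1)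
    (hcoeff : coeff (Finsupp.equivFunOnFinite.symm fun _ => p - 1) f = 1) :
    (∀ r : MvPolynomial (Fin n) K, Tr n p K (f * r ^ p) = r) ∧
    (∀ I : Ideal (MvPolynomial (Fin n) K),
      (∀ g ∈ I, Tr n p K (f * g) ∈ I) → IsSqFreeMonomialIdeal n K (initialIdeal m I)) := by
  have hlead' : lexp m f = qv n p := hlead
  have hcoeff' : coeff (qv n p) f = 1 := hcoeff
  constructor
  · intro r
    ext c
    rw [coeff_Tr, coeff_top_mul_pow m hlead' hcoeff']
    have : (coeff c r) ^ p = frobeniusEquiv K p (coeff c r) := rfl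
    rw [this, RingEquiv.symm_apply_apply]
  · intro I hI
    refine ⟨{u | (∀ j, u j ≤ 1) ∧ monomial u (1 : K) ∈ initialIdeal m I},
      fun u hu => hu.1, ?_⟩
    apply le_antisymm
    · rw [initialIdeal, Ideal.span_le]
      rintro x ⟨g, hg, hg0, rfl⟩
      obtain ⟨g', hg'I, hg'0, hg'lexp⟩ :=
        Tr_iter m hlead' hcoeff' hI (∑ j, lexp m g j) g hg hg0 le_rfl
      set u := lexp m g with hu
      set rd : Fin n →₀ ℕ := u.mapRange (fun a => min 1 a) (by simp) with hrd
      have hrdle : rd ≤ u := by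
        rw [Finsupp.le_def]
        intro j
        rw [hrd, Finsupp.mapRange_apply]
        exact min_le_right _ _
      have hrdG : rd ∈ {u | (∀ j, u j ≤ 1) ∧ monomial u (1 : K) ∈ initialIdeal m I} := by
        constructor
        · intro j
          rw [hrd, Finsupp.mapRange_apply]
          exact min_le_left _ _
        · rw [initialIdeal]
          exact Ideal.subset_span ⟨g', hg'I, hg'0, by rw [hg'lexp]⟩
      have hmon : (monomial u (1 : K)) = monomial (u - rd) 1 * monomial rd 1 := by
        rw [monomial_mul, one_mul, tsub_add_cancel_of_le hrdle]
      rw [SetLike.mem_coe, hmon]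
      exact Ideal.mul_mem_left _ _ (Ideal.subset_span ⟨rd, hrdG, rfl⟩)
    · rw [Ideal.span_le]
      rintro x ⟨uu, huu, rfl⟩
      exact huu.2
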